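/- Fix n ≥ 2. Then Ξ_λ = O(λ^{n−1} log λ) as λ → ∞; in particular Ξ_λ/λ^n → 0 as λ → ∞. -/
import Mathlib


noncomputable section

open Filter Asymptotics

/-- `Ξ_λ` from the paper. -/
def Xi (n : ℕ) (lam : ℝ) : ℕ :=
  (∑ k ∈ Finset.range (⌊lam⌋₊ + 2 - n),
    Nat.choose (k + n - 2) (n - 2) *
      Nat.choose (⌊lam / ((k : ℝ) + n - 1)⌋₊ + n - 2) (n - 1)) +
  ∑ k ∈ Finset.Icc 1 ⌊lam / ((n : ℝ) - 1)⌋₊,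
    Nat.choose (k + n - 2) (n - 2) * Nat.choose ⌊lam / (k : ℝ)⌋₊ (n - 1)

lemma harm_le_aux (m : ℕ) (hm : 1 ≤ m) (lam : ℝ) (hml : (m : ℝ) ≤ lam) :
    ∑ k ∈ Finset.range m, 1 / ((k : ℝ) + 1) ≤ 1 + Real.log lam := by
  have h1 : ∑ k ∈ Finset.range m, 1 / ((k : ℝ) + 1) = ((harmonic m : ℚ) : ℝ) := by
    rw [harmonic]
    push_cast
    simp [one_div]
  rw [h1]
  have h2 : ((harmonic m : ℚ) : ℝ) ≤ 1 + Real.log m := harmonic_le_one_add_log m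
  have h3 : Real.log m ≤ Real.log lam := by
    apply Real.log_le_log (by exact_mod_cast hm) hml
  linarith

lemma Xi_le_aux (n : ℕ) (hn : 2 ≤ n) (lam : ℝ) (hlam : (n : ℝ) ≤ lam) :
    (Xi n lam : ℝ) ≤ 2 * ((n : ℝ) - 1) ^ (n - 1) * lam ^ (n - 1) * (1 + Real.log lam) := by
  have hn1 : (1 : ℝ) ≤ (n : ℝ) - 1 := by
    have : (2 : ℝ) ≤ (n : ℝ) := by exact_mod_cast hn
    linarith
  have hlam0 : 0 < lam := by linarith
  set m := ⌊lam⌋₊ with hmdef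
  have hnm : n ≤ m := Nat.le_floor hlam
  have hm1 : 1 ≤ m := by omega
  have hmlam : (m : ℝ) ≤ lam := Nat.floor_le hlam0.le
  set C : ℝ := ((n : ℝ) - 1) ^ (n - 1) * lam ^ (n - 1) with hCdef
  have hC0 : 0 ≤ C := by positivity
  have hharm : ∑ k ∈ Finset.range m, 1 / ((k : ℝ) + 1) ≤ 1 + Real.log lam :=
    harm_le_aux m hm1 lam hmlam
  -- first sum
  have hs1 : (∑ k ∈ Finset.range (m + 2 - n),
      ((Nat.choose (k + n - 2) (n - 2) *
        Nat.choose (⌊lam / ((k : ℝ) + n - 1)⌋₊ + n - 2) (n - 1) : ℕ) : ℝ)) ≤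
      C * (1 + Real.log lam) := by
    have hterm : ∀ k ∈ Finset.range (m + 2 - n),
        ((Nat.choose (k + n - 2) (n - 2) *
          Nat.choose (⌊lam / ((k : ℝ) + n - 1)⌋₊ + n - 2) (n - 1) : ℕ) : ℝ) ≤
        C * (1 / ((k : ℝ) + 1)) := by
      intro k hk
      rw [Finset.mem_range] at hk
      have hkn : k + n ≤ m + 1 := by omega
      set d : ℝ := (k : ℝ) + n - 1 with hddef
      have hk0 : (0 : ℝ) ≤ (k : ℝ) := Nat.cast_nonneg k
      have hd1 : 1 ≤ d := by
        have : (2 : ℝ) ≤ (n : ℝ) := by exact_mod_cast hn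
        simp only [hddef]; linarith
      have hd0 : 0 < d := by linarith
      have hdlam : d ≤ lam := by
        have h : ((k : ℝ) + n) ≤ (m : ℝ) + 1 := by exact_mod_cast hkn
        simp only [hddef]; linarith
      have hq1 : 1 ≤ lam / d := (one_le_div hd0).mpr hdlam
      have hq0 : 0 ≤ lam / d := by positivity
      have hA : ((Nat.choose (k + n - 2) (n - 2) : ℕ) : ℝ) ≤ d ^ (n - 2) := by
        have h1 : Nat.choose (k + n - 2) (n - 2) ≤ (k + n - 2) ^ (n - 2) :=
          Nat.choose_le_pow _ _
        have h2 : ((k + n - 2 : ℕ) : ℝ) ≤ d := by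
          rw [Nat.cast_sub (by omega : 2 ≤ k + n)]
          push_cast
          simp only [hddef]; linarith
        calc ((Nat.choose (k + n - 2) (n - 2) : ℕ) : ℝ)
            ≤ (((k + n - 2) ^ (n - 2) : ℕ) : ℝ) := by exact_mod_cast h1
          _ = ((k + n - 2 : ℕ) : ℝ) ^ (n - 2) := by push_cast; ring
          _ ≤ d ^ (n - 2) := pow_le_pow_left₀ (Nat.cast_nonneg _) h2 _
      have hB : ((Nat.choose (⌊lam / d⌋₊ + n - 2) (n - 1) : ℕ) : ℝ) ≤
          (((n : ℝ) - 1) * (lam / d)) ^ (n - 1) := by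
        have h1 : Nat.choose (⌊lam / d⌋₊ + n - 2) (n - 1) ≤
            (⌊lam / d⌋₊ + n - 2) ^ (n - 1) := Nat.choose_le_pow _ _
        have h2 : ((⌊lam / d⌋₊ + n - 2 : ℕ) : ℝ) ≤ ((n : ℝ) - 1) * (lam / d) := by
          rw [Nat.cast_sub (by omega : 2 ≤ ⌊lam / d⌋₊ + n)]
          push_cast
          have hfl : (⌊lam / d⌋₊ : ℝ) ≤ lam / d := Nat.floor_le hq0
          nlinarith
        calc ((Nat.choose (⌊lam / d⌋₊ + n - 2) (n - 1) : ℕ) : ℝ)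
            ≤ (((⌊lam / d⌋₊ + n - 2) ^ (n - 1) : ℕ) : ℝ) := by exact_mod_cast h1
          _ = ((⌊lam / d⌋₊ + n - 2 : ℕ) : ℝ) ^ (n - 1) := by push_cast; ring
          _ ≤ (((n : ℝ) - 1) * (lam / d)) ^ (n - 1) :=
              pow_le_pow_left₀ (Nat.cast_nonneg _) h2 _
      have hprod : ((Nat.choose (k + n - 2) (n - 2) *
          Nat.choose (⌊lam / d⌋₊ + n - 2) (n - 1) : ℕ) : ℝ) ≤
          d ^ (n - 2) * (((n : ℝ) - 1) * (lam / d)) ^ (n - 1) := by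
        push_cast
        exact mul_le_mul hA hB (Nat.cast_nonneg _) (by positivity)
      have heq : d ^ (n - 2) * (((n : ℝ) - 1) * (lam / d)) ^ (n - 1) =
          C * (1 / d) := by
        rw [show n - 1 = (n - 2) + 1 from by omega, hCdef,
          show n - 1 = (n - 2) + 1 from by omega, mul_pow, div_pow]
        field_simp
        ring
      have hfin : C * (1 / d) ≤ C * (1 / ((k : ℝ) + 1)) := by
        apply mul_le_mul_of_nonneg_left _ hC0
        apply one_div_le_one_div_of_le (by linarith)
        simp only [hddef]; linarith
      calc ((Nat.choose (k + n - 2) (n - 2) *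
            Nat.choose (⌊lam / d⌋₊ + n - 2) (n - 1) : ℕ) : ℝ)
          ≤ d ^ (n - 2) * (((n : ℝ) - 1) * (lam / d)) ^ (n - 1) := hprod
        _ = C * (1 / d) := heq
        _ ≤ C * (1 / ((k : ℝ) + 1)) := hfin
    calc (∑ k ∈ Finset.range (m + 2 - n),
        ((Nat.choose (k + n - 2) (n - 2) *
          Nat.choose (⌊lam / ((k : ℝ) + n - 1)⌋₊ + n - 2) (n - 1) : ℕ) : ℝ))
        ≤ ∑ k ∈ Finset.range (m + 2 - n), C * (1 / ((k : ℝ) + 1)) :=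
          Finset.sum_le_sum hterm
      _ = C * ∑ k ∈ Finset.range (m + 2 - n), 1 / ((k : ℝ) + 1) := by
          rw [Finset.mul_sum]
      _ ≤ C * ∑ k ∈ Finset.range m, 1 / ((k : ℝ) + 1) := by
          apply mul_le_mul_of_nonneg_left _ hC0
          apply Finset.sum_le_sum_of_subset_of_nonneg
          · exact Finset.range_subset_range.mpr (by omega)
          · intro i _ _; positivity
      _ ≤ C * (1 + Real.log lam) := mul_le_mul_of_nonneg_left hharm hC0
  -- second sum
  have hs2 : (∑ k ∈ Finset.Icc 1 ⌊lam / ((n : ℝ) - 1)⌋₊,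
      ((Nat.choose (k + n - 2) (n - 2) * Nat.choose ⌊lam / (k : ℝ)⌋₊ (n - 1) : ℕ) : ℝ)) ≤
      C * (1 + Real.log lam) := by
    set K := ⌊lam / ((n : ℝ) - 1)⌋₊ with hKdef
    have hKm : K ≤ m := by
      apply Nat.floor_le_floor
      apply div_le_self hlam0.le hn1
    have hterm : ∀ k ∈ Finset.Icc 1 K,
        ((Nat.choose (k + n - 2) (n - 2) * Nat.choose ⌊lam / (k : ℝ)⌋₊ (n - 1) : ℕ) : ℝ) ≤
        C * (1 / (k : ℝ)) := by
      intro k hk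
      rw [Finset.mem_Icc] at hk
      obtain ⟨hk1, hkK⟩ := hk
      have hk1r : (1 : ℝ) ≤ (k : ℝ) := by exact_mod_cast hk1
      have hk0 : (0 : ℝ) < (k : ℝ) := by linarith
      have hklam : (k : ℝ) ≤ lam := by
        have h1 : (k : ℝ) ≤ (K : ℝ) := by exact_mod_cast hkK
        have h2 : (K : ℝ) ≤ lam / ((n : ℝ) - 1) := Nat.floor_le (by positivity)
        have h3 : lam / ((n : ℝ) - 1) ≤ lam := div_le_self hlam0.le hn1
        linarith
      have hA : ((Nat.choose (k + n - 2) (n - 2) : ℕ) : ℝ) ≤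
          (((n : ℝ) - 1) * k) ^ (n - 2) := by
        have h1 : Nat.choose (k + n - 2) (n - 2) ≤ (k + n - 2) ^ (n - 2) :=
          Nat.choose_le_pow _ _
        have h2 : ((k + n - 2 : ℕ) : ℝ) ≤ ((n : ℝ) - 1) * k := by
          rw [Nat.cast_sub (by omega : 2 ≤ k + n)]
          push_cast
          nlinarith
        calc ((Nat.choose (k + n - 2) (n - 2) : ℕ) : ℝ)
            ≤ (((k + n - 2) ^ (n - 2) : ℕ) : ℝ) := by exact_mod_cast h1
          _ = ((k + n - 2 : ℕ) : ℝ) ^ (n - 2) := by push_cast; ring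
          _ ≤ (((n : ℝ) - 1) * k) ^ (n - 2) := pow_le_pow_left₀ (Nat.cast_nonneg _) h2 _
      have hB : ((Nat.choose ⌊lam / (k : ℝ)⌋₊ (n - 1) : ℕ) : ℝ) ≤
          (lam / (k : ℝ)) ^ (n - 1) := by
        have h1 : Nat.choose ⌊lam / (k : ℝ)⌋₊ (n - 1) ≤ ⌊lam / (k : ℝ)⌋₊ ^ (n - 1) :=
          Nat.choose_le_pow _ _
        have h2 : ((⌊lam / (k : ℝ)⌋₊ : ℕ) : ℝ) ≤ lam / (k : ℝ) := Nat.floor_le (by positivity)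
        calc ((Nat.choose ⌊lam / (k : ℝ)⌋₊ (n - 1) : ℕ) : ℝ)
            ≤ ((⌊lam / (k : ℝ)⌋₊ ^ (n - 1) : ℕ) : ℝ) := by exact_mod_cast h1
          _ = ((⌊lam / (k : ℝ)⌋₊ : ℕ) : ℝ) ^ (n - 1) := by push_cast; ring
          _ ≤ (lam / (k : ℝ)) ^ (n - 1) := pow_le_pow_left₀ (Nat.cast_nonneg _) h2 _
      have hprod : ((Nat.choose (k + n - 2) (n - 2) *
          Nat.choose ⌊lam / (k : ℝ)⌋₊ (n - 1) : ℕ) : ℝ) ≤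
          (((n : ℝ) - 1) * k) ^ (n - 2) * (lam / (k : ℝ)) ^ (n - 1) := by
        push_cast
        exact mul_le_mul hA hB (Nat.cast_nonneg _) (by positivity)
      have heq : (((n : ℝ) - 1) * k) ^ (n - 2) * (lam / (k : ℝ)) ^ (n - 1) =
          ((n : ℝ) - 1) ^ (n - 2) * lam ^ (n - 1) * (1 / (k : ℝ)) := by
        rw [show n - 1 = (n - 2) + 1 from by omega, mul_pow, div_pow]
        field_simp
        ring
      have hle : ((n : ℝ) - 1) ^ (n - 2) * lam ^ (n - 1) * (1 / (k : ℝ)) ≤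
          C * (1 / (k : ℝ)) := by
        apply mul_le_mul_of_nonneg_right _ (by positivity)
        apply mul_le_mul_of_nonneg_right _ (by positivity)
        exact pow_le_pow_right₀ hn1 (by omega)
      calc ((Nat.choose (k + n - 2) (n - 2) *
            Nat.choose ⌊lam / (k : ℝ)⌋₊ (n - 1) : ℕ) : ℝ)
          ≤ (((n : ℝ) - 1) * k) ^ (n - 2) * (lam / (k : ℝ)) ^ (n - 1) := hprod
        _ = ((n : ℝ) - 1) ^ (n - 2) * lam ^ (n - 1) * (1 / (k : ℝ)) := heq
        _ ≤ C * (1 / (k : ℝ)) := hle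
    have hsum2 : ∑ k ∈ Finset.Icc 1 K, 1 / (k : ℝ) ≤ 1 + Real.log lam := by
      have hsub : ∑ k ∈ Finset.Icc 1 K, 1 / (k : ℝ) ≤ ∑ k ∈ Finset.Icc 1 m, 1 / (k : ℝ) := by
        apply Finset.sum_le_sum_of_subset_of_nonneg
        · exact Finset.Icc_subset_Icc_right hKm
        · intro i _ _; positivity
      have heqh : ∑ k ∈ Finset.Icc 1 m, 1 / (k : ℝ) =
          ∑ k ∈ Finset.range m, 1 / ((k : ℝ) + 1) := by
        rw [← Finset.Ico_add_one_right_eq_Icc, Finset.sum_Ico_eq_sum_range]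
        simp [one_div, add_comm]
      calc ∑ k ∈ Finset.Icc 1 K, 1 / (k : ℝ)
          ≤ ∑ k ∈ Finset.Icc 1 m, 1 / (k : ℝ) := hsub
        _ = ∑ k ∈ Finset.range m, 1 / ((k : ℝ) + 1) := heqh
        _ ≤ 1 + Real.log lam := hharm
    calc (∑ k ∈ Finset.Icc 1 K,
        ((Nat.choose (k + n - 2) (n - 2) * Nat.choose ⌊lam / (k : ℝ)⌋₊ (n - 1) : ℕ) : ℝ))
        ≤ ∑ k ∈ Finset.Icc 1 K, C * (1 / (k : ℝ)) := Finset.sum_le_sum hterm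
      _ = C * ∑ k ∈ Finset.Icc 1 K, 1 / (k : ℝ) := by rw [Finset.mul_sum]
      _ ≤ C * (1 + Real.log lam) := mul_le_mul_of_nonneg_left hsum2 hC0
  calc (Xi n lam : ℝ)
      = (∑ k ∈ Finset.range (m + 2 - n),
          ((Nat.choose (k + n - 2) (n - 2) *
            Nat.choose (⌊lam / ((k : ℝ) + n - 1)⌋₊ + n - 2) (n - 1) : ℕ) : ℝ)) +
        (∑ k ∈ Finset.Icc 1 ⌊lam / ((n : ℝ) - 1)⌋₊,
          ((Nat.choose (k + n - 2) (n - 2) *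
            Nat.choose ⌊lam / (k : ℝ)⌋₊ (n - 1) : ℕ) : ℝ)) := by
        rw [Xi]; push_cast; ring
    _ ≤ C * (1 + Real.log lam) + C * (1 + Real.log lam) := add_le_add hs1 hs2
    _ = 2 * ((n : ℝ) - 1) ^ (n - 1) * lam ^ (n - 1) * (1 + Real.log lam) := by
        rw [hCdef]; ring

theorem Xi_isBigO_and_tendsto (n : ℕ) (hn : 2 ≤ n) :
    ((fun lam : ℝ => (Xi n lam : ℝ)) =O[Filter.atTop]
      (fun lam : ℝ => lam ^ (n - 1) * Real.log lam)) ∧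
    Filter.Tendsto (fun lam : ℝ => (Xi n lam : ℝ) / lam ^ n) Filter.atTop (nhds 0) := by
  have h1 : (fun lam : ℝ => (Xi n lam : ℝ)) =O[Filter.atTop]
      (fun lam : ℝ => lam ^ (n - 1) * Real.log lam) := by
    rw [isBigO_iff]
    refine ⟨4 * ((n : ℝ) - 1) ^ (n - 1), ?_⟩
    filter_upwards [eventually_ge_atTop ((n : ℝ)), eventually_ge_atTop (Real.exp 1)]
      with lam hnl hel
    have hlam0 : 0 < lam := lt_of_lt_of_le (Real.exp_pos 1) hel
    have hlog1 : 1 ≤ Real.log lam := by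
      rw [Real.le_log_iff_exp_le hlam0]; exact hel
    have hbound := Xi_le_aux n hn lam hnl
    rw [Real.norm_eq_abs, Real.norm_eq_abs, abs_of_nonneg (Nat.cast_nonneg _),
      abs_of_nonneg (by positivity : (0:ℝ) ≤ lam ^ (n - 1) * Real.log lam)]
    have h2 : 1 + Real.log lam ≤ 2 * Real.log lam := by linarith
    calc (Xi n lam : ℝ)
        ≤ 2 * ((n : ℝ) - 1) ^ (n - 1) * lam ^ (n - 1) * (1 + Real.log lam) := hbound
      _ ≤ 2 * ((n : ℝ) - 1) ^ (n - 1) * lam ^ (n - 1) * (2 * Real.log lam) := by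
          apply mul_le_mul_of_nonneg_left h2
          have : (1:ℝ) ≤ (n:ℝ) - 1 := by
            have : (2:ℝ) ≤ (n:ℝ) := by exact_mod_cast hn
            linarith
          positivity
      _ = 4 * ((n : ℝ) - 1) ^ (n - 1) * (lam ^ (n - 1) * Real.log lam) := by ring
  have hlit : (fun lam : ℝ => lam ^ (n - 1) * Real.log lam) =o[Filter.atTop]
      (fun lam : ℝ => lam ^ n) := by
    have h := (isBigO_refl (fun lam : ℝ => lam ^ (n - 1)) Filter.atTop).mul_isLittleO
      Real.isLittleO_log_id_atTop
    have heq : (fun lam : ℝ => lam ^ (n - 1) * id lam) = fun lam : ℝ => lam ^ n := by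
      funext x
      simp only [id]
      rw [← pow_succ, Nat.sub_add_cancel (by omega : 1 ≤ n)]
    rw [heq] at h
    exact h
  exact ⟨h1, (h1.trans_isLittleO hlit).tendsto_div_nhds_zero⟩
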